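/- Let dim H = 3. If ω ∈ S²H*⊗Λ²V* is nondegenerate of rank 8, then every σ ∈ Λ²H⊗S²V with σ̃∘ω̃ = 0 satisfies σ = 0. (This is the transcription of the smoothness part of the paper's unified proof of the Ellingsrud–Strømme theorem: H²(S²E) = 0 for every mathematical 3-instanton bundle E, so MI(3) is smooth.) -/

import Mathlib

open TensorProduct Module Matrix Polynomial

/-! Auxiliary lemmas for the proof of Statement 12 (smoothness of `MI(3)`,
Ellingsrud–Strømme). -/

section Aux
variable {k : Type} [Field k]



lemma fin3_cases : ∀ m p : Fin 3, m = p ∨ m = p + 1 ∨ m = p + 2 := by decide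

lemma fin3_e1 : ∀ δ : Fin 3, δ + 1 + 1 = δ + 2 := by decide
lemma fin3_e2 : ∀ δ : Fin 3, δ + 2 + 1 = δ := by decide
lemma fin3_e3 : ∀ δ : Fin 3, δ + 1 + 2 = δ := by decide
lemma fin3_e4 : ∀ δ : Fin 3, δ + 2 + 2 = δ + 1 := by decide
lemma fin3_n1 : ∀ δ : Fin 3, δ + 1 ≠ δ := by decide
lemma fin3_n2 : ∀ δ : Fin 3, δ + 2 ≠ δ := by decide
lemma fin3_n3 : ∀ δ : Fin 3, δ + 1 ≠ δ + 2 := by decide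

lemma fin3_sum {M : Type} [AddCommMonoid M] (f : Fin 3 → M) (γ : Fin 3) :
    (∑ m, f m) = f γ + f (γ + 1) + f (γ + 2) := by
  fin_cases γ <;>
    simp [Fin.sum_univ_three, show (1:Fin 3)+1 = 2 from rfl, show (1:Fin 3)+2 = 0 by rfl,
      show (2:Fin 3)+1 = 0 by rfl, show (2:Fin 3)+2 = 1 by rfl] <;> abel

lemma two_dep {M : Type} [AddCommGroup M] [Module k M] (s t : k) (x y : M)
    (h : s • x + t • y = 0) (hs : s ≠ 0) : x = (-t / s) • y := by
  have : s • x = -t • y := by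
    linear_combination (norm := module) h
  have := congrArg (fun z => s⁻¹ • z) this
  simpa [smul_smul, inv_mul_cancel₀ hs, div_eq_inv_mul, mul_comm] using this

/-- Dichotomy lemma: from a nontrivial dependency among `u 0, u 1, u 2` (not all zero),
produce `c, t, a` realizing the rank-one cross-product structure. -/
lemma dichotomy {M : Type} [AddCommGroup M] [Module k M] (u : Fin 3 → M)
    (hne : ∃ m, u m ≠ 0) (d : Fin 3 → k) (hd : d ≠ 0)
    (hdep : (∑ m, d m • u m) = 0) :
    ∃ (c : Fin 3 → k) (t : Fin 3 → k) (a : M), t ≠ 0 ∧ a ≠ 0 ∧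
      ∀ j, c (j + 2) • u (j + 1) - c (j + 1) • u (j + 2) = t j • a := by
  classical
  by_cases hpair : ∃ γ : Fin 3, ∀ s t : k, s • u (γ + 1) + t • u (γ + 2) = 0 → s = 0 ∧ t = 0
  · -- case (b): an independent pair exists
    obtain ⟨γ, hind⟩ := hpair
    have ha : u (γ + 1) ≠ 0 := by
      intro h0
      have := (hind 1 0 (by simp [h0])).1
      simp at this
    have hdγ : d γ ≠ 0 := by
      intro h0
      rw [fin3_sum _ γ, h0, zero_smul, zero_add] at hdep
      obtain ⟨h1, h2⟩ := hind _ _ hdep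
      apply hd
      funext m
      rcases fin3_cases m γ with h | h | h <;> simp [h, h0, h1, h2]
    set x : k := -(d (γ + 1)) / d γ with hx
    set y : k := -(d (γ + 2)) / d γ with hy
    have hu : u γ = x • u (γ + 1) + y • u (γ + 2) := by
      rw [fin3_sum _ γ] at hdep
      have h1 : d γ • u γ + (d (γ+1) • u (γ+1) + d (γ+2) • u (γ+2)) = 0 := by
        linear_combination (norm := module) hdep
      have h2 := two_dep (d γ) 1 (u γ) (d (γ+1) • u (γ+1) + d (γ+2) • u (γ+2))
        (by simpa using h1) hdγ
      rw [h2, hx, hy]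
      match_scalars <;> field_simp
    refine ⟨fun m => if m = γ + 2 then 1 else if m = γ then y else 0,
      fun j => if j = γ then 1 else if j = γ + 1 then -x else -y, u (γ + 1), ?_, ha, ?_⟩
    · intro h0
      have := congrFun h0 γ
      simp at this
    · intro j
      rcases fin3_cases j γ with h | h | h <;> rw [h] <;> beta_reduce
      · rw [if_pos rfl, if_neg (fin3_n3 γ), if_neg (fin3_n1 γ), if_pos rfl]
        module
      · rw [fin3_e3 γ, fin3_e1 γ, if_neg (Ne.symm (fin3_n2 γ)), if_pos rfl, if_pos rfl,
          if_neg (fin3_n1 γ), if_pos rfl, hu]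
        module
      · rw [fin3_e4 γ, fin3_e2 γ, if_neg (fin3_n3 γ), if_neg (fin3_n1 γ),
          if_neg (Ne.symm (fin3_n2 γ)), if_pos rfl, if_neg (fin3_n2 γ), if_neg (Ne.symm (fin3_n3 γ))]
        module
  · -- case (a): all vectors are multiples of one nonzero vector
    push_neg at hpair
    obtain ⟨p, hp⟩ := hne
    have hmu : ∀ m, ∃ μ : k, u m = μ • u p := by
      intro m
      rcases fin3_cases m p with h | h | h
      · exact ⟨1, by simp [h]⟩
      · obtain ⟨s, t, hst, hst2⟩ := hpair (p + 2)
        rw [fin3_e2, fin3_e4] at hst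
        by_cases ht : t = 0
        · exfalso
          rw [ht, zero_smul, add_zero] at hst
          rcases smul_eq_zero.mp hst with h' | h'
          · exact hst2 h' ht
          · exact hp h'
        · refine ⟨-s / t, ?_⟩
          rw [h]
          exact two_dep t s _ _ (by linear_combination (norm := module) hst) ht
      · obtain ⟨s, t, hst, hst2⟩ := hpair (p + 1)
        rw [fin3_e1, fin3_e3] at hst
        by_cases hs : s = 0
        · exfalso
          rw [hs, zero_smul, zero_add] at hst
          rcases smul_eq_zero.mp hst with h' | h'
          · exact hst2 hs h'
          · exact hp h'
        · refine ⟨-t / s, ?_⟩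
          rw [h]
          exact two_dep s t _ _ hst hs
    choose μ hμ using hmu
    have hμp : μ p = 1 := by
      by_contra hne1
      have : (μ p - 1) • u p = 0 := by
        have := hμ p
        rw [sub_smul, one_smul, ← this, sub_self]
      rcases smul_eq_zero.mp this with h' | h'
      · exact hne1 (sub_eq_zero.mp h')
      · exact hp h'
    refine ⟨fun m => if m = p + 1 then 1 else 0,
      fun j => (if j + 2 = p + 1 then (1:k) else 0) * μ (j + 1) -
        (if j + 1 = p + 1 then (1:k) else 0) * μ (j + 2), u p, ?_, hp, ?_⟩
    · intro h0
      have := congrFun h0 (p + 2)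
      rw [fin3_e4, fin3_e2] at this
      simp only [if_pos rfl, if_neg ((fin3_n1 p).symm ∘ Eq.symm), Pi.zero_apply] at this
      rw [hμp] at this
      simp at this
    · intro j
      rw [hμ (j + 1), hμ (j + 2)]
      match_scalars
      ring


end Aux



lemma evaldet {k : Type} [Field k] {r : ℕ} (Mp : Matrix (Fin r) (Fin r) k[X]) (s : k) :
    eval s Mp.det = (Mp.map (eval s)).det := by
  have := RingHom.map_det (evalRingHom s) Mp
  simpa [RingHom.mapMatrix_apply, coe_evalRingHom] using this

/-- Binary determinant lemma. -/
lemma h1 {k : Type} [Field k] [IsAlgClosed k] [CharZero k] {r : ℕ} (hr : r ≠ 0)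
    (A B : Matrix (Fin r) (Fin r) k) :
    ∃ s t : k, ¬(s = 0 ∧ t = 0) ∧ (s • A + t • B).det = 0 := by
  classical
  have heval : ∀ s : k,
      (Matrix.det (fun i j => C (A i j) + X * C (B i j))).eval s = (A + s • B).det := by
    intro s
    refine (evaldet (Matrix.of fun i j => C (A i j) + X * C (B i j)) s).trans ?_
    congr 1
    funext i j
    simp only [Matrix.map_apply, Matrix.add_apply, Matrix.smul_apply, smul_eq_mul, eval_add,
      Matrix.of_apply, eval_mul, eval_C, eval_X]
  by_cases hdeg : (Matrix.det (fun i j => C (A i j) + X * C (B i j))).degree = 0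
  · obtain ⟨c, hc⟩ : ∃ c, Matrix.det (fun i j => C (A i j) + X * C (B i j)) = C c :=
      ⟨_, Polynomial.eq_C_of_degree_le_zero hdeg.le⟩
    have heval2 : ∀ s : k,
        (Matrix.det (fun i j => C (A i j) * X + C (B i j))).eval s = (s • A + B).det := by
      intro s
      refine (evaldet (Matrix.of fun i j => C (A i j) * X + C (B i j)) s).trans ?_
      congr 1
      funext i j
      simp only [Matrix.map_apply, Matrix.add_apply, Matrix.smul_apply, smul_eq_mul, eval_add,
        Matrix.of_apply, eval_mul, eval_C, eval_X]
      ring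
    have hQ : Matrix.det (fun i j => C (A i j) * X + C (B i j)) = C c * X ^ r := by
      apply Polynomial.eq_of_infinite_eval_eq
      apply Set.Infinite.mono (s := {x : k | x ≠ 0})
      · intro s hs
        have hs' : (s : k) ≠ 0 := hs
        have h2 : (s • A + B) = s • (A + s⁻¹ • B) := by
          rw [smul_add, smul_smul, mul_inv_cancel₀ hs', one_smul]
        simp only [Set.mem_setOf_eq, heval2, h2, Matrix.det_smul, Fintype.card_fin]
        rw [show (A + s⁻¹ • B).det = _ from (heval s⁻¹).symm, hc]
        simp only [eval_mul, eval_pow, eval_C, eval_X]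
        ring
      · have : ({x : k | x ≠ 0}) = ({0}ᶜ : Set k) := by ext; simp
        rw [this]
        exact (Set.finite_singleton 0).infinite_compl
    refine ⟨0, 1, by simp, ?_⟩
    have := heval2 0
    rw [hQ] at this
    simpa [zero_pow hr] using this.symm
  · obtain ⟨x, hx⟩ := IsAlgClosed.exists_root _ hdeg
    refine ⟨1, x, by simp, ?_⟩
    rw [one_smul, ← heval x]
    exact hx

section K
variable {k : Type} [Field k] [IsAlgClosed k] [CharZero k]

set_option synthInstance.maxHeartbeats 1000000 in
set_option maxHeartbeats 1000000 in
/-- Key step: a nonzero triple of symmetric 4×4 matrices admits a vector `zv` whose images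
are nonzero and linearly dependent. -/
lemma keystep (q : Fin 3 → Matrix (Fin 4) (Fin 4) k) (hsym : ∀ m, (q m)ᵀ = q m)
    (hq : ∃ m, q m ≠ 0) :
    ∃ (zv : Fin 4 → k) (d : Fin 3 → k), d ≠ 0 ∧ (∑ m, d m • (q m).mulVec zv) = 0 ∧
      ∃ m, (q m).mulVec zv ≠ 0 := by
  classical
  set B : LinearMap.BilinForm k (Fin 4 → k) :=
    LinearMap.mk₂ k (fun x y => x ⬝ᵥ y)
      (fun x x' y => add_dotProduct x x' y) (fun s x y => smul_dotProduct s x y)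
      (fun x y y' => dotProduct_add x y y') (fun s x y => dotProduct_smul s x y) with hB
  have hBapp : ∀ x y : Fin 4 → k, B x y = x ⬝ᵥ y := fun x y => rfl
  have hBrefl : B.IsRefl := by
    intro x y h
    rw [hBapp] at h ⊢
    rwa [dotProduct_comm]
  have hBnd : B.Nondegenerate := by
    refine hBrefl.nondegenerate_iff_separatingLeft.mpr fun x hx => ?_
    funext i
    have := hx (Pi.single i 1)
    rwa [hBapp, dotProduct_single, mul_one] at this
  set N : Submodule k (Fin 4 → k) := ⨅ m, LinearMap.ker ((q m).mulVecLin) with hN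
  have hmemN : ∀ x, x ∈ N ↔ ∀ m, (q m).mulVec x = 0 := by
    intro x
    simp [hN, Submodule.mem_iInf, LinearMap.mem_ker]
  have hNtop : N ≠ ⊤ := by
    intro h
    obtain ⟨m, hm⟩ := hq
    apply hm
    ext i j
    have h2 := (hmemN (Pi.single j 1)).mp (h ▸ Submodule.mem_top) m
    have h3 := congrFun h2 i
    rw [mulVec_single] at h3
    simpa using h3
  -- orthogonality of outputs to N
  have horth : ∀ (zv : Fin 4 → k) (m : Fin 3), ((q m).mulVec zv) ∈ B.orthogonal N := by
    intro zv m
    rw [LinearMap.BilinForm.mem_orthogonal_iff]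
    intro n hn
    have hn' := (hmemN n).mp hn m
    show B n ((q m).mulVec zv) = 0
    rw [hBapp, dotProduct_mulVec, ← mulVec_transpose, hsym, hn', zero_dotProduct]
  have hdim : finrank k N + finrank k (B.orthogonal N) = 4 := by
    have := LinearMap.BilinForm.finrank_orthogonal hBnd N
    have h4 : finrank k (Fin 4 → k) = 4 := by simp
    have hle : finrank k N ≤ finrank k (Fin 4 → k) := Submodule.finrank_le N
    rw [h4] at hle
    omega
  rcases Nat.eq_zero_or_pos (finrank k N) with h0 | hpos
  · -- N = ⊥ : use the quartic determinant
    have hNbot : N = ⊥ := Submodule.finrank_eq_zero.mp h0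
    obtain ⟨s, t, hst, hdet⟩ := h1 (by norm_num) (q 0) (q 1)
    obtain ⟨zv, hzv, hker⟩ := (Matrix.exists_mulVec_eq_zero_iff.mpr hdet)
    refine ⟨zv, ![s, t, 0], ?_, ?_, ?_⟩
    · intro h
      exact hst ⟨by have := congrFun h 0; simpa using this,
        by have := congrFun h 1; simpa using this⟩
    · rw [Fin.sum_univ_three]
      simp only [Matrix.cons_val_zero, Matrix.cons_val_one, Matrix.head_cons,
        Matrix.cons_val_two, Matrix.tail_cons]
      rw [← hker]
      rw [Matrix.add_mulVec, Matrix.smul_mulVec, Matrix.smul_mulVec]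
      module
    · by_contra hall
      push_neg at hall
      have : zv ∈ N := (hmemN zv).mpr hall
      rw [hNbot, Submodule.mem_bot] at this
      exact hzv this
  rcases Nat.lt_or_ge (finrank k N) 2 with h1n | h2n
  · -- dim N = 1 : cubic determinant in coordinates on the orthogonal complement
    have hdimN : finrank k N = 1 := by omega
    have hdimO : finrank k (B.orthogonal N) = 3 := by omega
    let b₀ : Basis (Fin 3) k (B.orthogonal N) := finBasisOfFinrankEq k _ hdimO
    -- the coordinate matrix, linear in zv
    let L : Fin 3 → (Fin 4 → k) →ₗ[k] (B.orthogonal N) := fun m =>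
      LinearMap.codRestrict (B.orthogonal N) ((q m).mulVecLin) (fun zv => horth zv m)
    let F : (Fin 4 → k) → Matrix (Fin 3) (Fin 3) k := fun zv i m => b₀.repr (L m zv) i
    have hFlin : ∀ (s t : k) (x y : Fin 4 → k), F (s • x + t • y) = s • F x + t • F y := by
      intro s t x y
      funext i m
      simp [F, Matrix.add_apply, Matrix.smul_apply, map_add, _root_.map_smul, smul_eq_mul]
      rfl
    -- a 2-plane avoiding N
    obtain ⟨Wc, hWc⟩ := Submodule.exists_isCompl N
    have hdimW : finrank k Wc = 3 := by
      have := Submodule.finrank_add_eq_of_isCompl hWc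
      simp at this
      omega
    let bW : Basis (Fin 3) k Wc := finBasisOfFinrankEq k _ hdimW
    obtain ⟨s, t, hst, hdet⟩ := h1 (by norm_num) (F (bW 0)) (F (bW 1))
    set zv : Fin 4 → k := s • (bW 0 : Fin 4 → k) + t • (bW 1 : Fin 4 → k) with hzv
    have hzvW : zv ∈ Wc := by
      apply Submodule.add_mem <;> exact Submodule.smul_mem _ _ (SetLike.coe_mem _)
    have hzvN : zv ∉ N := by
      intro hmem
      have : zv ∈ N ⊓ Wc := ⟨hmem, hzvW⟩
      rw [hWc.inf_eq_bot, Submodule.mem_bot] at this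
      have : s • bW 0 + t • bW 1 = (0 : Wc) := by
        apply Subtype.ext
        simpa [hzv] using this
      have hsum3 : (∑ i, (![s, t, 0] : Fin 3 → k) i • bW i) = 0 := by
        rw [Fin.sum_univ_three]
        simp only [Matrix.cons_val_zero, Matrix.cons_val_one, Matrix.head_cons,
          Matrix.cons_val_two, Matrix.tail_cons]
        rw [zero_smul, add_zero]
        exact this
      have hli := Fintype.linearIndependent_iff.mp bW.linearIndependent ![s, t, 0] hsum3
      exact hst ⟨by simpa using hli 0, by simpa using hli 1⟩
    have hdetzv : (F zv).det = 0 := by rw [hzv, hFlin, hdet]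
    obtain ⟨d, hd, hker⟩ := Matrix.exists_mulVec_eq_zero_iff.mpr hdetzv
    refine ⟨zv, d, hd, ?_, ?_⟩
    · have hrepr : b₀.repr (∑ m, d m • L m zv) = 0 := by
        ext i
        have hki := congrFun hker i
        simp only [Matrix.mulVec, dotProduct, F, Pi.zero_apply] at hki
        rw [map_sum, Finsupp.finset_sum_apply, Finsupp.coe_zero, Pi.zero_apply]
        rw [← hki]
        apply Finset.sum_congr rfl
        intro m _
        rw [_root_.map_smul, Finsupp.smul_apply, smul_eq_mul, mul_comm]
      have h0 : (∑ m, d m • L m zv) = (0 : B.orthogonal N) := by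
        simpa using b₀.repr.map_eq_zero_iff.mp hrepr
      have h0' := congrArg (Subtype.val) h0
      simp [L] at h0'
      exact h0'
    · by_contra hall
      push_neg at hall
      exact hzvN ((hmemN zv).mpr hall)
  · -- dim N ≥ 2 : three outputs in a ≤2-dimensional space are dependent
    have hdimO : finrank k (B.orthogonal N) ≤ 2 := by omega
    obtain ⟨zv, hzvN⟩ : ∃ zv, zv ∉ N := by
      by_contra hall
      push_neg at hall
      exact hNtop (Submodule.eq_top_iff'.mpr hall)
    have hnotli : ¬ LinearIndependent k (fun m : Fin 3 =>
        (⟨(q m).mulVec zv, horth zv m⟩ : B.orthogonal N)) := by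
      intro hli
      have := hli.fintype_card_le_finrank
      simp at this
      omega
    obtain ⟨d, hsum, m, hdm⟩ := Fintype.not_linearIndependent_iff.mp hnotli
    refine ⟨zv, d, ?_, ?_, ?_⟩
    · intro h; exact hdm (by rw [h]; rfl)
    · have := congrArg (Subtype.val) hsum
      simpa using this
    · by_contra hall
      push_neg at hall
      exact hzvN ((hmemN zv).mpr hall)
end K

section M
variable {k : Type} [Field k] [IsAlgClosed k] [CharZero k]

/-- Core lemma: a nonzero alternating symmetric-valued `G` admits `c, zv` producing a
"rank one" output family. -/
lemma coreM (G : Fin 3 → Fin 3 → Matrix (Fin 4) (Fin 4) k)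
    (halt : ∀ i, G i i = 0)
    (hskew : ∀ i j, G j i = - G i j)
    (hsym : ∀ i j, (G i j)ᵀ = G i j)
    (hne : ∃ i j, G i j ≠ 0) :
    ∃ (c : Fin 3 → k) (zv : Fin 4 → k) (t : Fin 3 → k) (a : Fin 4 → k),
      t ≠ 0 ∧ a ≠ 0 ∧ ∀ j, (∑ i, c i • (G i j).mulVec zv) = t j • a := by
  classical
  set q : Fin 3 → Matrix (Fin 4) (Fin 4) k := ![G 1 2, G 2 0, G 0 1] with hqdef
  have hqsym : ∀ m, (q m)ᵀ = q m := by
    intro m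
    fin_cases m <;> simp [hqdef] <;> exact hsym _ _
  have hq : ∃ m, q m ≠ 0 := by
    obtain ⟨i, j, hij⟩ := hne
    fin_cases i <;> fin_cases j
    · exact absurd (halt 0) hij
    · exact ⟨2, by simpa [hqdef] using hij⟩
    · exact ⟨1, by
        simp only [hqdef]
        simp only [Matrix.cons_val_one, Matrix.head_cons]
        rw [show G 2 0 = - G 0 2 from hskew 0 2]
        simpa using hij⟩
    · exact ⟨2, by
        simp only [hqdef]
        simp only [Matrix.cons_val_two, Matrix.tail_cons, Matrix.head_cons]
        rw [show G 0 1 = - G 1 0 from hskew 1 0]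
        simpa using hij⟩
    · exact absurd (halt 1) hij
    · exact ⟨0, by simpa [hqdef] using hij⟩
    · exact ⟨1, by simpa [hqdef] using hij⟩
    · exact ⟨0, by
        simp only [hqdef]
        simp only [Matrix.cons_val_zero]
        rw [show G 1 2 = - G 2 1 from hskew 2 1]
        simpa using hij⟩
    · exact absurd (halt 2) hij
  obtain ⟨zv, d, hd, hdep, hune⟩ := keystep q hqsym hq
  obtain ⟨c, t, a, ht, ha, hform⟩ :=
    dichotomy (fun m => (q m).mulVec zv) hune d hd hdep
  refine ⟨c, zv, t, a, ht, ha, ?_⟩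
  intro j
  rw [Fin.sum_univ_three]
  rcases (by decide : ∀ x : Fin 3, x = 0 ∨ x = 1 ∨ x = 2) j with rfl | rfl | rfl
  · have h0 := hform 0
    simp only [hqdef, Matrix.cons_val_zero, Matrix.cons_val_one, Matrix.head_cons,
      Matrix.cons_val_two, Matrix.tail_cons, show (0:Fin 3)+1 = 1 from rfl,
      show (0:Fin 3)+2 = 2 from rfl] at h0 ⊢
    rw [halt 0, show G 1 0 = - G 0 1 from hskew 0 1]
    rw [Matrix.zero_mulVec, Matrix.neg_mulVec, smul_zero, zero_add]
    linear_combination (norm := module) h0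
  · have h0 := hform 1
    simp only [hqdef, Matrix.cons_val_zero, Matrix.cons_val_one, Matrix.head_cons,
      Matrix.cons_val_two, Matrix.tail_cons, show (1:Fin 3)+1 = 2 from rfl,
      show (1:Fin 3)+2 = 0 by rfl] at h0 ⊢
    rw [halt 1, show G 2 1 = - G 1 2 from hskew 1 2]
    rw [Matrix.zero_mulVec, Matrix.neg_mulVec, smul_zero]
    linear_combination (norm := module) h0
  · have h0 := hform 2
    simp only [hqdef, Matrix.cons_val_zero, Matrix.cons_val_one, Matrix.head_cons,
      Matrix.cons_val_two, Matrix.tail_cons, show (2:Fin 3)+1 = 0 by rfl,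
      show (2:Fin 3)+2 = 1 by rfl] at h0 ⊢
    rw [halt 2, show G 0 2 = - G 2 0 from hskew 2 0]
    rw [Matrix.zero_mulVec, Matrix.neg_mulVec, smul_zero]
    linear_combination (norm := module) h0
end M





set_option maxHeartbeats 2000000 in
set_option synthInstance.maxHeartbeats 1000000 in
/-- For `dim H = 3` and a nondegenerate `ω` of rank 8, every `σ ∈ Λ²H⊗S²V`
with `σ̃ ∘ ω̃ = 0` vanishes: smoothness of `MI(3)` (Ellingsrud–Strømme). -/
theorem statement12
    (k : Type) [Field k] [IsAlgClosed k] [CharZero k]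
    (V H : Type) [AddCommGroup V] [Module k V] [AddCommGroup H] [Module k H]
    [FiniteDimensional k V] [FiniteDimensional k H]
    (hV : finrank k V = 4) (hH : finrank k H = 3)
    (φ : H →ₗ[k] H →ₗ[k] V →ₗ[k] V →ₗ[k] k)
    (hφsymm : ∀ h h' : H, φ h h' = φ h' h)
    (hφalt : ∀ (h h' : H) (v : V), φ h h' v v = 0)
    (W : H ⊗[k] V →ₗ[k] Dual k (H ⊗[k] V))
    (hW : ∀ (h h' : H) (v v' : V), W (h ⊗ₜ v) (h' ⊗ₜ v') = φ h h' v v')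
    (hrank : finrank k (LinearMap.range W) = 8)
    (hnd : ∀ h : H, h ≠ 0 → ∀ v : V, v ≠ 0 → W (h ⊗ₜ[k] v) ≠ 0)
    (ψ : Dual k H →ₗ[k] Dual k H →ₗ[k] Dual k V →ₗ[k] Dual k V →ₗ[k] k)
    (hψalt : ∀ ξ : Dual k H, ψ ξ ξ = 0)
    (hψsymm : ∀ (ξ ξ' : Dual k H) (z z' : Dual k V), ψ ξ ξ' z z' = ψ ξ ξ' z' z)
    (S : Dual k (H ⊗[k] V) →ₗ[k] H ⊗[k] V)
    (hS : ∀ (ξ ξ' : Dual k H) (z z' : Dual k V),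
      dualDistrib k H V (ξ' ⊗ₜ z') (S (dualDistrib k H V (ξ ⊗ₜ z))) = ψ ξ ξ' z z')
    (hcomp : S ∘ₗ W = 0) :
    ψ = 0 := by
  classical
  -- skew-symmetry of ψ in the H-arguments
  have hψskew : ∀ ξ ξ' : Dual k H, ψ ξ' ξ = - ψ ξ ξ' := by
    intro ξ ξ'
    have h0 := hψalt (ξ + ξ')
    rw [map_add ψ ξ ξ', LinearMap.add_apply, map_add (ψ ξ) ξ ξ', map_add (ψ ξ') ξ ξ',
      hψalt ξ, hψalt ξ', zero_add, add_zero] at h0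
    exact eq_neg_of_add_eq_zero_right (a := ψ ξ ξ') (b := ψ ξ' ξ) h0
  -- skew-symmetry of φ in the V-arguments
  have hφskew : ∀ (h h' : H) (v v' : V), φ h h' v' v = - φ h h' v v' := by
    intro h h' v v'
    have h0 := hφalt h h' (v + v')
    rw [map_add (φ h h') v v', LinearMap.add_apply, map_add (φ h h' v) v v',
      map_add (φ h h' v') v v', hφalt h h' v, hφalt h h' v', zero_add, add_zero] at h0
    exact eq_neg_of_add_eq_zero_right h0
  -- W is skew-adjoint
  have hWskew : ∀ x y : H ⊗[k] V, W x y = - W y x := by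
    intro x
    induction x using TensorProduct.induction_on with
    | zero => intro y; simp
    | tmul h v =>
      intro y
      induction y using TensorProduct.induction_on with
      | zero => simp
      | tmul h' v' =>
        rw [hW, hW, hφsymm h' h]
        exact hφskew h h' v' v
      | add y₁ y₂ ih₁ ih₂ =>
        simp only [map_add, LinearMap.add_apply, ih₁, ih₂]
        abel
    | add x₁ x₂ ih₁ ih₂ =>
      intro y
      simp only [map_add, LinearMap.add_apply, ih₁ y, ih₂ y]
      abel
  -- surjectivity of dualDistrib
  have hsurj : Function.Surjective (dualDistrib k H V) := by
    intro f
    exact ⟨(TensorProduct.dualDistribEquivOfBasis (Module.finBasis k H)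
      (Module.finBasis k V)).symm f,
      (TensorProduct.dualDistribEquivOfBasis (Module.finBasis k H)
        (Module.finBasis k V)).apply_symm_apply f⟩
  -- S is skew-adjoint
  have hSskew : ∀ f g : Dual k (H ⊗[k] V), f (S g) = - g (S f) := by
    have key : ∀ F G : Dual k H ⊗[k] Dual k V,
        dualDistrib k H V F (S (dualDistrib k H V G)) =
          - dualDistrib k H V G (S (dualDistrib k H V F)) := by
      intro F
      induction F using TensorProduct.induction_on with
      | zero => intro G; simp
      | tmul ξ z =>
        intro G
        induction G using TensorProduct.induction_on with
        | zero => simp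
        | tmul ξ' z' =>
          rw [hS ξ' ξ z' z, hS ξ ξ' z z', hψskew ξ ξ']
          simp only [LinearMap.neg_apply]
          exact congrArg Neg.neg (hψsymm ξ ξ' z' z)
        | add G₁ G₂ ih₁ ih₂ =>
          simp only [map_add, LinearMap.add_apply, ih₁, ih₂]
          abel
      | add F₁ F₂ ih₁ ih₂ =>
        intro G
        simp only [map_add, LinearMap.add_apply, ih₁ G, ih₂ G]
        abel
    intro f g
    obtain ⟨F, rfl⟩ := hsurj f
    obtain ⟨G, rfl⟩ := hsurj g
    exact key F G
  -- W ∘ S = 0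
  have hWS : ∀ f : Dual k (H ⊗[k] V), W (S f) = 0 := by
    intro f
    refine LinearMap.ext fun y => ?_
    rw [LinearMap.zero_apply, hWskew (S f) y, hSskew (W y) f]
    have : S (W y) = 0 := by
      have := LinearMap.congr_fun hcomp y
      simpa using this
    rw [this, map_zero, neg_zero, neg_zero]
  -- bases
  set bH : Basis (Fin 3) k H := Module.finBasisOfFinrankEq k H hH with hbH
  set bV : Basis (Fin 4) k V := Module.finBasisOfFinrankEq k V hV with hbV
  set bHV : Basis (Fin 3 × Fin 4) k (H ⊗[k] V) := Basis.tensorProduct bH bV with hbHV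
  -- coordinate functionals are dualDistrib of dual basis tensors
  have hA1 : ∀ (j : Fin 3) (w : Fin 4) (u : H ⊗[k] V),
      dualDistrib k H V (bH.dualBasis j ⊗ₜ bV.dualBasis w) u = bHV.repr u (j, w) := by
    intro j w
    have : (dualDistrib k H V (bH.dualBasis j ⊗ₜ bV.dualBasis w) : Dual k (H ⊗[k] V)) =
        bHV.coord (j, w) := by
      apply bHV.ext
      rintro ⟨j', w'⟩
      rw [hbHV, Basis.tensorProduct_apply, dualDistrib_apply]
      simp only [Basis.coord_apply, Basis.tensorProduct_repr_tmul_apply, Basis.repr_self,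
        Finsupp.single_apply, Prod.mk.injEq, Basis.dualBasis_apply_self]
      split <;> rename_i h1 <;> split <;> rename_i h2 <;>
        first
          | rfl
          | simp [h1, h2]
          | (exfalso; simp_all)
    intro u
    rw [this, Basis.coord_apply]
  -- the matrices G i j
  by_contra hψ0
  set G : Fin 3 → Fin 3 → Matrix (Fin 4) (Fin 4) k := fun i j => Matrix.of fun w w' =>
    ψ (bH.dualBasis i) (bH.dualBasis j) (bV.dualBasis w) (bV.dualBasis w') with hG
  have hGne : ∃ i j, G i j ≠ 0 := by
    by_contra hall
    push_neg at hall
    apply hψ0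
    apply bH.dualBasis.ext; intro i
    apply bH.dualBasis.ext; intro j
    apply bV.dualBasis.ext; intro w
    apply bV.dualBasis.ext; intro w'
    have := congrFun (congrFun (hall i j) w) w'
    simpa [hG] using this
  obtain ⟨c, zv, t, a, ht, ha, hform⟩ := coreM G
    (fun i => by
      ext w w'
      simp [hG, hψalt])
    (fun i j => by
      ext w w'
      simp only [hG, Matrix.of_apply, Matrix.neg_apply]
      rw [hψskew]
      simp)
    (fun i j => by
      ext w w'
      simp only [hG, Matrix.transpose_apply, Matrix.of_apply]
      exact hψsymm _ _ _ _)
    hGne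
  -- the elements
  set ξ : Dual k H := ∑ i, c i • bH.dualBasis i with hξ
  set z : Dual k V := ∑ w, zv w • bV.dualBasis w with hz
  set hh : H := ∑ j, t j • bH j with hhh
  set vv : V := ∑ w, a w • bV w with hvv
  -- S applied to the pure dual tensor is the pure tensor hh ⊗ vv
  have hSx : S (dualDistrib k H V (ξ ⊗ₜ z)) = hh ⊗ₜ vv := by
    apply bHV.repr.injective
    ext ⟨j, w⟩
    rw [← hA1 j w, ← hA1 j w, hS ξ (bH.dualBasis j) z (bV.dualBasis w)]
    -- left side: expand ξ and z
    have hmid : ψ ξ (bH.dualBasis j) z (bV.dualBasis w) =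
        ∑ i, c i * ((G i j).mulVec zv w) := by
      have rhs_eq : (∑ i, c i * ((G i j).mulVec zv w)) =
          ∑ i, ∑ w', c i * (G i j w w' * zv w') := by
        apply Finset.sum_congr rfl
        intro i _
        rw [show ((G i j).mulVec zv) w = ∑ w', G i j w w' * zv w' from by
          simp [Matrix.mulVec, dotProduct], Finset.mul_sum]
      rw [hξ, hz, rhs_eq]
      simp only [map_sum, LinearMap.sum_apply, _root_.map_smul, LinearMap.smul_apply,
        smul_eq_mul, Finset.mul_sum]
      rw [Finset.sum_comm]
      apply Finset.sum_congr rfl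
      intro i _
      apply Finset.sum_congr rfl
      intro w' _
      simp only [hG, Matrix.of_apply]
      rw [hψsymm]
      ring
    rw [hmid]
    -- right side
    have hright : dualDistrib k H V (bH.dualBasis j ⊗ₜ bV.dualBasis w) (hh ⊗ₜ vv) =
        t j * a w := by
      rw [dualDistrib_apply]
      congr 1
      · rw [hhh, Basis.coe_dualBasis, map_sum]
        simp [Basis.coord_apply, Basis.repr_self, Finsupp.single_apply,
          Finset.sum_ite_eq', eq_comm]
      · rw [hvv, Basis.coe_dualBasis, map_sum]
        simp [Basis.coord_apply, Basis.repr_self, Finsupp.single_apply,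
          Finset.sum_ite_eq', eq_comm]
    rw [hright]
    have h2 := congrFun (hform j) w
    simp only [Finset.sum_apply, Pi.smul_apply, smul_eq_mul] at h2
    exact h2
  -- hh and vv are nonzero
  have hhne : hh ≠ 0 := by
    intro h0
    apply ht
    funext j
    have := congrArg (fun x => bH.repr x j) h0
    simp only [hhh, map_sum, _root_.map_smul] at this
    simpa [Basis.repr_self, Finsupp.finset_sum_apply, Finsupp.smul_apply,
      Finsupp.single_apply, smul_eq_mul, Finset.sum_ite_eq', eq_comm] using this
  have hvvne : vv ≠ 0 := by
    intro h0
    apply ha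
    funext w
    have := congrArg (fun x => bV.repr x w) h0
    simp only [hvv, map_sum, _root_.map_smul] at this
    simpa [Basis.repr_self, Finsupp.finset_sum_apply, Finsupp.smul_apply,
      Finsupp.single_apply, smul_eq_mul, Finset.sum_ite_eq', eq_comm] using this
  -- contradiction with nondegeneracy
  apply hnd hh hhne vv hvvne
  rw [← hSx]
  exact hWS _
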